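/- For every word W of length n in the two operators I and C, the sequence obtained by applying the operators of W in succession to the one-term sequence (1) is a sequence (h_0, …, h_n) of length n+1 of positive integers that is palindromic, unimodal, and satisfies h_0 = h_n = 1. (This is the h-vector of the n-dimensional IC variety determined by W, and the conclusions express Poincaré duality and the unimodality consequence of the strong Lefschetz theorem for middle-perversity intersection homology of these toric varieties.) -/

import Mathlib

/-- The operator `I`: convolution with `(1,1)`, sending a sequence of length
`n+1` to one of length `n+2`, with `(Ih)_k = h_k + h_{k-1}` (out-of-range
terms are zero). -/
def Iop {n : ℕ} (h : Fin (n + 1) → ℝ) : Fin (n + 2) → ℝ := fun k =>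
  (if hk : (k : ℕ) < n + 1 then h ⟨(k : ℕ), hk⟩ else 0) +
  (if hk : 1 ≤ (k : ℕ) then h ⟨(k : ℕ) - 1, by omega⟩ else 0)

/-- The operator `C`: repeating the middle term, sending a sequence of length
`n+1` to one of length `n+2`, with `(Ch)_k = h_k` for `k ≤ ⌈n/2⌉` and
`(Ch)_k = h_{k-1}` otherwise. -/
def Cop {n : ℕ} (h : Fin (n + 1) → ℝ) : Fin (n + 2) → ℝ := fun k =>
  if hk : (k : ℕ) ≤ (n + 1) / 2 then h ⟨(k : ℕ), by omega⟩
  else h ⟨(k : ℕ) - 1, by omega⟩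

/-- A finite sequence `(h_0, …, h_n)` is palindromic if `h_k = h_{n-k}`. -/
def Palindromic {n : ℕ} (h : Fin (n + 1) → ℝ) : Prop :=
  ∀ k : Fin (n + 1), h k = h ⟨n - (k : ℕ), by omega⟩

/-- A finite sequence `(h_0, …, h_n)` is unimodal if it is weakly increasing
up to index `⌊n/2⌋` and weakly decreasing from index `⌊n/2⌋` on. -/
def Unimodal {n : ℕ} (h : Fin (n + 1) → ℝ) : Prop :=
  (∀ j k : Fin (n + 1), (j : ℕ) ≤ (k : ℕ) → (k : ℕ) ≤ n / 2 → h j ≤ h k) ∧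
  (∀ j k : Fin (n + 1), n / 2 ≤ (j : ℕ) → (j : ℕ) ≤ (k : ℕ) → h k ≤ h j)

/-- Applying a word in the operators `I` (entry `true`) and `C` (entry `false`)
to the one-term sequence `(1)`.  The result has length `W.length + 1`. -/
def applyWord : (W : List Bool) → (Fin (W.length + 1) → ℝ)
  | [] => fun _ => 1
  | b :: W => if b then Iop (applyWord W) else Cop (applyWord W)


lemma hcg {n : ℕ} (h : Fin (n + 1) → ℝ) {a b : ℕ} (ha : a < n + 1) (hb : b < n + 1)
    (e : a = b) : h ⟨a, ha⟩ = h ⟨b, hb⟩ := by subst e; rfl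

/-- increasing up to the ceiling `(n+1)/2`. -/
def Inc {n : ℕ} (h : Fin (n + 1) → ℝ) : Prop :=
  ∀ j k : ℕ, (hj : j ≤ k) → (hk : k ≤ (n + 1) / 2) →
    h ⟨j, by omega⟩ ≤ h ⟨k, by omega⟩

lemma inc_of_step {n : ℕ} (h : Fin (n + 1) → ℝ)
    (st : ∀ k : ℕ, (hk : k + 1 ≤ (n + 1) / 2) →
      h ⟨k, by omega⟩ ≤ h ⟨k + 1, by omega⟩) : Inc h := by
  intro j k hj hk
  induction k with
  | zero => exact le_of_eq (hcg h _ _ (by omega))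
  | succ m ih =>
    rcases Nat.eq_or_lt_of_le hj with he | hlt
    · exact le_of_eq (hcg h _ _ he)
    · exact le_trans (ih (by omega) (by omega)) (st m hk)

lemma unimodal_of {n : ℕ} (h : Fin (n + 1) → ℝ) (hp : Palindromic h) (hi : Inc h) :
    Unimodal h := by
  constructor
  · intro j k hjk hk
    have : h ⟨(j:ℕ), by omega⟩ ≤ h ⟨(k:ℕ), by omega⟩ := hi j k hjk (by omega)
    exact this
  · intro j k hj hjk
    have h1 : h k = h ⟨n - (k:ℕ), by omega⟩ := hp k
    have h2 : h j = h ⟨n - (j:ℕ), by omega⟩ := hp j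
    rw [h1, h2]
    exact hi (n - (k:ℕ)) (n - (j:ℕ)) (by omega) (by omega)

def Good {n : ℕ} (h : Fin (n + 1) → ℝ) : Prop :=
  (∀ k : Fin (n + 1), ∃ m : ℕ, 0 < m ∧ h k = (m : ℝ)) ∧
  Palindromic h ∧ Inc h ∧
  h ⟨0, by omega⟩ = 1 ∧ h ⟨n, by omega⟩ = 1

lemma good_pos {n : ℕ} {h : Fin (n + 1) → ℝ} (hg : Good h) (k : Fin (n + 1)) :
    0 < h k := by
  obtain ⟨m, hm, he⟩ := hg.1 k
  rw [he]; exact_mod_cast hm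

lemma good_Iop {n : ℕ} {h : Fin (n + 1) → ℝ} (hg : Good h) : Good (Iop h) := by
  obtain ⟨hpos, hpal, hinc, h0, hn⟩ := hg
  have hpal' : ∀ (a : ℕ) (ha : a < n + 1), h ⟨a, ha⟩ = h ⟨n - a, by omega⟩ :=
    fun a ha => hpal ⟨a, ha⟩
  refine ⟨?_, ?_, ?_, ?_, ?_⟩
  · -- positivity / integrality
    rintro ⟨kk, hkk⟩
    simp only [Iop, Fin.val_mk]
    by_cases c1 : kk < n + 1
    · by_cases c2 : 1 ≤ kk
      · rw [dif_pos c1, dif_pos c2]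
        obtain ⟨m1, hm1, e1⟩ := hpos ⟨kk, c1⟩
        obtain ⟨m2, hm2, e2⟩ := hpos ⟨kk - 1, by omega⟩
        exact ⟨m1 + m2, by omega, by rw [e1, e2]; push_cast; ring⟩
      · rw [dif_pos c1, dif_neg c2]
        obtain ⟨m1, hm1, e1⟩ := hpos ⟨kk, c1⟩
        exact ⟨m1, hm1, by rw [e1]; ring⟩
    · rw [dif_neg c1, dif_pos (by omega : 1 ≤ kk)]
      obtain ⟨m2, hm2, e2⟩ := hpos ⟨kk - 1, by omega⟩
      exact ⟨m2, hm2, by rw [e2]; ring⟩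
  · -- palindromic
    rintro ⟨kk, hkk⟩
    simp only [Iop, Fin.val_mk]
    by_cases c0 : kk = 0
    · subst c0
      rw [dif_pos (by omega : (0:ℕ) < n + 1), dif_neg (by omega : ¬ 1 ≤ (0:ℕ)),
        dif_neg (by omega : ¬ (n + 1 - 0 < n + 1)), dif_pos (by omega : 1 ≤ n + 1 - 0)]
      rw [hpal' 0 (by omega), hcg h _ (by omega) (by omega : n - 0 = n + 1 - 0 - 1)]
      ring
    · by_cases cn : kk = n + 1
      · rw [dif_neg (by omega : ¬ kk < n + 1), dif_pos (by omega : 1 ≤ kk),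
          dif_pos (by omega : n + 1 - kk < n + 1), dif_neg (by omega : ¬ 1 ≤ n + 1 - kk)]
        rw [hpal' (kk - 1) (by omega), hcg h _ (by omega) (by omega : n - (kk - 1) = n + 1 - kk)]
        ring
      · rw [dif_pos (by omega : kk < n + 1), dif_pos (by omega : 1 ≤ kk),
          dif_pos (by omega : n + 1 - kk < n + 1), dif_pos (by omega : 1 ≤ n + 1 - kk)]
        rw [hpal' kk (by omega), hpal' (kk - 1) (by omega),
          hcg h _ (by omega) (by omega : n - kk = n + 1 - kk - 1),
          hcg h _ (by omega) (by omega : n - (kk - 1) = n + 1 - kk)]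
        ring
  · -- Inc
    apply inc_of_step
    intro k hk
    have hk2 : k + 1 ≤ (n + 2) / 2 := hk
    simp only [Iop, Fin.val_mk]
    by_cases c0 : k = 0
    · subst c0
      rw [dif_pos (by omega : (0:ℕ) < n + 1), dif_neg (by omega : ¬ 1 ≤ (0:ℕ)),
        dif_pos (by omega : 1 ≤ 0 + 1)]
      by_cases c1 : 0 + 1 < n + 1
      · rw [dif_pos c1]
        have hp1 : (0:ℝ) < h ⟨0 + 1, c1⟩ := good_pos ⟨hpos, hpal, hinc, h0, hn⟩ ⟨0 + 1, c1⟩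
        have e : h ⟨0 + 1 - 1, by omega⟩ = h ⟨0, by omega⟩ := hcg h _ _ (by omega)
        rw [e]; linarith
      · rw [dif_neg c1]
        have e : h ⟨0 + 1 - 1, by omega⟩ = h ⟨0, by omega⟩ := hcg h _ _ (by omega)
        rw [e]; linarith
    · have hkn : k + 1 ≤ n := by omega
      rw [dif_pos (by omega : k < n + 1), dif_pos (by omega : 1 ≤ k),
        dif_pos (by omega : k + 1 < n + 1), dif_pos (by omega : 1 ≤ k + 1)]
      have e : h ⟨k + 1 - 1, by omega⟩ = h ⟨k, by omega⟩ := hcg h _ _ (by omega)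
      rw [e]
      have key : h ⟨k - 1, by omega⟩ ≤ h ⟨k + 1, by omega⟩ := by
        by_cases cc : k + 1 ≤ (n + 1) / 2
        · exact hinc (k - 1) (k + 1) (by omega) cc
        · rw [hpal' (k + 1) (by omega), hcg h _ (by omega) (by omega : n - (k + 1) = k - 1)]
      linarith
  · simp only [Iop, Fin.val_mk]
    rw [dif_pos (by omega : (0:ℕ) < n + 1), dif_neg (by omega : ¬ 1 ≤ (0:ℕ))]
    rw [h0]; ring
  · simp only [Iop, Fin.val_mk]
    rw [dif_neg (by omega : ¬ n + 1 < n + 1), dif_pos (by omega : 1 ≤ n + 1)]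
    rw [hcg h _ (by omega) (by omega : n + 1 - 1 = n), hn]; ring

lemma good_Cop {n : ℕ} {h : Fin (n + 1) → ℝ} (hg : Good h) : Good (Cop h) := by
  obtain ⟨hpos, hpal, hinc, h0, hn⟩ := hg
  have hpal' : ∀ (a : ℕ) (ha : a < n + 1), h ⟨a, ha⟩ = h ⟨n - a, by omega⟩ :=
    fun a ha => hpal ⟨a, ha⟩
  refine ⟨?_, ?_, ?_, ?_, ?_⟩
  · rintro ⟨kk, hkk⟩
    simp only [Cop, Fin.val_mk]
    by_cases c : kk ≤ (n + 1) / 2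
    · rw [dif_pos c]; exact hpos _
    · rw [dif_neg c]; exact hpos _
  · rintro ⟨kk, hkk⟩
    simp only [Cop, Fin.val_mk]
    by_cases c1 : kk ≤ (n + 1) / 2
    · by_cases c2 : n + 1 - kk ≤ (n + 1) / 2
      · rw [dif_pos c1, dif_pos c2]
        exact hcg h _ _ (by omega)
      · rw [dif_pos c1, dif_neg c2]
        rw [hpal' kk (by omega)]
        exact hcg h _ _ (by omega)
    · by_cases c2 : n + 1 - kk ≤ (n + 1) / 2
      · rw [dif_neg c1, dif_pos c2]
        rw [hpal' (kk - 1) (by omega)]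
        exact hcg h _ _ (by omega)
      · omega
  · apply inc_of_step
    intro k hk
    have hk2 : k + 1 ≤ (n + 2) / 2 := hk
    simp only [Cop, Fin.val_mk]
    rw [dif_pos (by omega : k ≤ (n + 1) / 2)]
    by_cases cc : k + 1 ≤ (n + 1) / 2
    · rw [dif_pos cc]
      exact hinc k (k + 1) (by omega) cc
    · rw [dif_neg cc]
      exact le_of_eq (hcg h _ _ (by omega))
  · simp only [Cop, Fin.val_mk]
    rw [dif_pos (by omega : (0:ℕ) ≤ (n + 1) / 2)]
    exact h0
  · simp only [Cop, Fin.val_mk]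
    rw [dif_neg (by omega : ¬ n + 1 ≤ (n + 1) / 2)]
    rw [hcg h _ _ (by omega : n + 1 - 1 = n)]
    exact hn

lemma good_applyWord (W : List Bool) : Good (applyWord W) := by
  induction W with
  | nil =>
    refine ⟨fun k => ⟨1, by norm_num, by simp [applyWord]⟩, ?_, ?_, rfl, rfl⟩
    · intro k; rfl
    · intro j k _ _; exact le_refl _
  | cons b W ih =>
    cases b
    · show Good (Cop (applyWord W))
      exact good_Cop ih
    · show Good (Iop (applyWord W))
      exact good_Iop ih

/-- For every word `W` of length `n` in the operators `I` and `C`, applying the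
operators of `W` in succession to the sequence `(1)` yields a sequence
`(h_0, …, h_n)` of positive integers that is palindromic, unimodal, and has
`h_0 = h_n = 1`:  the h-vector of the `n`-dimensional `IC` variety determined
by `W`. -/
theorem applyWord_h_vector (W : List Bool) :
    (∀ k : Fin (W.length + 1), ∃ m : ℕ, 0 < m ∧ applyWord W k = (m : ℝ)) ∧
    Palindromic (applyWord W) ∧ Unimodal (applyWord W) ∧
    applyWord W ⟨0, Nat.succ_pos _⟩ = 1 ∧
    applyWord W ⟨W.length, Nat.lt_succ_self _⟩ = 1 := by
  obtain ⟨hpos, hpal, hinc, h0, hn⟩ := good_applyWord W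
  exact ⟨hpos, hpal, unimodal_of _ hpal hinc, h0, hn⟩
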